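/- Let k(u) be a nonnegative measurable function on [0,∞) supported in [0, R] for some R > 0, and define u(z₁,z₂) = |z₁-z₂|²/(4 Im z₁ Im z₂) for z₁,z₂ in the upper half-plane. Then for t ∈ ℝ, the modified Zagier transform M(t) = ∬_ℍ k(u(z+t, 1/z̄)) y dx dy (with z = x+iy) vanishes whenever t² / 4 > R, since u(z+t, 1/z̄) ≥ t²/4 for all z ∈ ℍ. -/

import Mathlib

open Real MeasureTheory

/-- The hyperbolic point-pair invariant. -/
noncomputable def pairInvariant (z₁ z₂ : ℂ) : ℝ :=
  ‖z₁ - z₂‖ ^ 2 / (4 * z₁.im * z₂.im)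

lemma key_pairInvariant_lower (t : ℝ) (z : ℂ) (hz : 0 < z.im) :
    t ^ 2 / 4 ≤ pairInvariant (z + t) (1 / (starRingEnd ℂ z)) := by
  have hz2 : z.im ≠ 0 := ne_of_gt hz
  have ha : (0:ℝ) < z.re^2 + z.im^2 := by positivity
  unfold pairInvariant
  rw [Complex.sq_norm]
  simp only [one_div, Complex.inv_im, Complex.inv_re, Complex.normSq_conj,
    Complex.conj_re, Complex.conj_im, Complex.normSq_apply, Complex.sub_re, Complex.sub_im,
    Complex.add_re, Complex.add_im, Complex.ofReal_re, Complex.ofReal_im, ← sq,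
    neg_neg, neg_sq, add_zero]
  rw [div_le_div_iff₀ (by norm_num) (by positivity)]
  have hkey : ((z.re + t - z.re / (z.re ^ 2 + z.im ^ 2)) ^ 2 +
      (z.im - z.im / (z.re ^ 2 + z.im ^ 2)) ^ 2) * (z.re^2+z.im^2)
      - t^2 * z.im^2 = (t * z.re + z.re^2 + z.im^2 - 1)^2 := by
    field_simp
    ring
  have h1 : t ^ 2 * (4 * z.im * (z.im / (z.re ^ 2 + z.im ^ 2)))
      = (t^2 * z.im^2 * 4) / (z.re^2+z.im^2) := by ring
  rw [h1, div_le_iff₀ ha]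
  nlinarith [hkey, sq_nonneg (t * z.re + z.re^2 + z.im^2 - 1)]

theorem stmt_19 (k : ℝ → ℝ) (R : ℝ) (hR : 0 < R)
    (hmeas : Measurable k) (hnonneg : ∀ u, 0 ≤ k u)
    (hsupp : Function.support k ⊆ Set.Icc 0 R)
    (t : ℝ) (ht : R < t ^ 2 / 4) :
    (∀ z : ℂ, 0 < z.im →
      t ^ 2 / 4 ≤ pairInvariant (z + t) (1 / (starRingEnd ℂ z))) ∧
    (∫ x : ℝ, ∫ y in Set.Ioi (0 : ℝ),
      k (pairInvariant ((x : ℂ) + y * Complex.I + t)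
          (1 / (starRingEnd ℂ ((x : ℂ) + y * Complex.I)))) * y) = 0 := by
  refine ⟨fun z hz => key_pairInvariant_lower t z hz, ?_⟩
  have hzero : ∀ (x y : ℝ), y ∈ Set.Ioi (0:ℝ) →
      k (pairInvariant ((x : ℂ) + y * Complex.I + t)
          (1 / (starRingEnd ℂ ((x : ℂ) + y * Complex.I)))) * y = 0 := by
    intro x y hy
    have him : ((x : ℂ) + y * Complex.I).im = y := by simp
    have hle := key_pairInvariant_lower t ((x : ℂ) + y * Complex.I) (by rw [him]; exact hy)
    have hk : k (pairInvariant ((x : ℂ) + y * Complex.I + t)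
        (1 / (starRingEnd ℂ ((x : ℂ) + y * Complex.I)))) = 0 := by
      by_contra h
      have := hsupp h
      have : pairInvariant ((x : ℂ) + y * Complex.I + t)
          (1 / (starRingEnd ℂ ((x : ℂ) + y * Complex.I))) ≤ R := this.2
      linarith
    rw [hk, zero_mul]
  have hinner : ∀ x : ℝ, (∫ y in Set.Ioi (0 : ℝ),
      k (pairInvariant ((x : ℂ) + y * Complex.I + t)
          (1 / (starRingEnd ℂ ((x : ℂ) + y * Complex.I)))) * y) = 0 := by
    intro x
    rw [setIntegral_congr_fun measurableSet_Ioi (fun y hy => hzero x y hy)]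
    simp
  simp only [hinner, integral_zero]
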